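/- arXiv:0708.3114 — 2 statements merged into one kernel-verified Lean document; each statement's English description precedes it below -/
import Mathlib

section
/- Let X be a smooth manifold, H a closed 3-form on X, {U_i} an open cover with even-form cocycle {ω̄_{ij}} as above, and let {ρ_i}, {ρ'_i} be two partitions of unity subordinate to the cover. Then the resulting global odd forms Θ and Θ' (built from η_i = Σ_k ρ_k ω̄_{ki} and η'_i = Σ_k ρ'_k ω̄_{ki}) differ by a (d − H)-exact form: Θ − Θ' = (d − H)η where η = Σ_k (ρ_k − ρ'_k) ω̄_{ki} is a globally well-defined even form. -/
/-- Dependence of the glued twisted form `Θ` on the partition of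
unity.  In the setting of the twisted Čech–de Rham diagram chase (forms modelled as
functions into an `ℝ`-algebra `V`, `d` a local `ℝ`-linear differential, `H` a closed
3-form), let `Θ` and `Θ'` be the global odd forms built from the `(d-H)`-closed
cocycle `ω̄_{ij}` using two partitions of unity `{ρ_i}` and `{ρ'_i}`, i.e.
`Θ|_{U_i} = (d-H)η_i` with `η_i = Σ_k ρ_k ω̄_{ki}`, and similarly for `Θ'`.  Then the
local even forms `Σ_k (ρ_k - ρ'_k) ω̄_{ki}` are independent of `i` on overlaps, hence
glue to a global even form `η`, and `Θ - Θ' = (d - H) η`. -/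
theorem twisted_theta_partition_of_unity_dependence
    {ι X : Type*} {V : Type*} [Ring V] [Algebra ℝ V]
    [TopologicalSpace X]
    (U : ι → Set X) (hUopen : ∀ i, IsOpen (U i)) (hcover : ∀ x, ∃ i, x ∈ U i)
    (d : (X → V) →ₗ[ℝ] (X → V))
    (H : X → V)
    (hloc : ∀ (f g : X → V) (s : Set X), IsOpen s → (∀ x ∈ s, f x = g x) →
      ∀ x ∈ s, d f x = d g x)
    (hd2 : ∀ (f : X → V) (x : X), d (d f) x = 0)
    (hdH : ∀ x, d H x = 0)
    (hH2 : ∀ x, H x * H x = 0)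
    (hLeib : ∀ (f : X → V) (x : X),
      d (fun y => H y * f y) x = d H x * f x - H x * d f x)
    (ω : ι → ι → X → V)
    (hcocycle : ∀ i j k, ∀ x, x ∈ U i → x ∈ U j → x ∈ U k →
      ω j k x - ω i k x + ω i j x = 0)
    (hclosed : ∀ i j, ∀ x, x ∈ U i → x ∈ U j →
      d (ω i j) x - H x * ω i j x = 0)
    (ρ ρ' : ι → X → ℝ)
    (hfin : ∀ x, (Function.support fun k => ρ k x).Finite)
    (hfin' : ∀ x, (Function.support fun k => ρ' k x).Finite)
    (hnonneg : ∀ k x, 0 ≤ ρ k x) (hnonneg' : ∀ k x, 0 ≤ ρ' k x)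
    (hsum : ∀ x, ∑ᶠ k, ρ k x = 1) (hsum' : ∀ x, ∑ᶠ k, ρ' k x = 1)
    (hsupp : ∀ k x, ρ k x ≠ 0 → x ∈ U k) (hsupp' : ∀ k x, ρ' k x ≠ 0 → x ∈ U k)
    (Θ Θ' : X → V)
    (hΘ : ∀ i, ∀ x ∈ U i,
      Θ x = d (fun y => ∑ᶠ k, ρ k y • ω k i y) x
              - H x * (∑ᶠ k, ρ k x • ω k i x))
    (hΘ' : ∀ i, ∀ x ∈ U i,
      Θ' x = d (fun y => ∑ᶠ k, ρ' k y • ω k i y) x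
              - H x * (∑ᶠ k, ρ' k x • ω k i x)) :
    (∀ i j, ∀ x, x ∈ U i → x ∈ U j →
      (∑ᶠ k, (ρ k x - ρ' k x) • ω k i x) = ∑ᶠ k, (ρ k x - ρ' k x) • ω k j x) ∧
    ∃ η : X → V,
      (∀ i, ∀ x ∈ U i, η x = ∑ᶠ k, (ρ k x - ρ' k x) • ω k i x) ∧
      (∀ x, Θ x - Θ' x = d η x - H x * η x) := by
  -- finiteness facts
  have hfs : ∀ (i : ι) (x : X),
      (Function.support fun k => ρ k x • ω k i x).Finite := fun i x =>
    (hfin x).subset (by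
      intro k hk
      simp only [Function.mem_support] at hk ⊢
      intro h; exact hk (by simp [h]))
  have hfs' : ∀ (i : ι) (x : X),
      (Function.support fun k => ρ' k x • ω k i x).Finite := fun i x =>
    (hfin' x).subset (by
      intro k hk
      simp only [Function.mem_support] at hk ⊢
      intro h; exact hk (by simp [h]))
  have hdiffU : ∀ x, (Function.support fun k => ρ k x - ρ' k x).Finite := fun x =>
    ((hfin x).union (hfin' x)).subset (by
      intro k hk
      simp only [Function.mem_support, Set.mem_union] at hk ⊢
      by_contra h
      push_neg at h
      exact hk (by rw [h.1, h.2, sub_zero]))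
  have hfsd : ∀ (i : ι) (x : X),
      (Function.support fun k => (ρ k x - ρ' k x) • ω k i x).Finite := fun i x =>
    (hdiffU x).subset (by
      intro k hk
      simp only [Function.mem_support] at hk ⊢
      intro h; exact hk (by simp [h]))
  -- membership of U k for nonzero coefficients
  have hmem : ∀ k x, ρ k x - ρ' k x ≠ 0 → x ∈ U k := by
    intro k x h
    by_cases h1 : ρ k x = 0
    · exact hsupp' k x (by intro h2; exact h (by rw [h1, h2, sub_zero]))
    · exact hsupp k x h1
  -- the key well-definedness statement
  have key : ∀ i j, ∀ x, x ∈ U i → x ∈ U j →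
      (∑ᶠ k, (ρ k x - ρ' k x) • ω k i x) = ∑ᶠ k, (ρ k x - ρ' k x) • ω k j x := by
    intro i j x hi hj
    have hterm : ∀ k, (ρ k x - ρ' k x) • ω k i x
        = (ρ k x - ρ' k x) • ω k j x - (ρ k x - ρ' k x) • ω i j x := by
      intro k
      by_cases h : ρ k x - ρ' k x = 0
      · simp [h]
      · have hk := hmem k x h
        have hc := hcocycle k i j x hk hi hj
        have h0 : ω k i x - (ω k j x - ω i j x) = 0 := by rw [← hc]; abel
        rw [sub_eq_zero.mp h0, smul_sub]
    calc ∑ᶠ k, (ρ k x - ρ' k x) • ω k i x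
        = ∑ᶠ k, ((ρ k x - ρ' k x) • ω k j x - (ρ k x - ρ' k x) • ω i j x) :=
          finsum_congr hterm
      _ = (∑ᶠ k, (ρ k x - ρ' k x) • ω k j x)
            - ∑ᶠ k, (ρ k x - ρ' k x) • ω i j x := by
          refine finsum_sub_distrib (hfsd j x) ?_
          refine (hdiffU x).subset ?_
          intro k hk
          simp only [Function.mem_support] at hk ⊢
          intro h; exact hk (by simp [h])
      _ = ∑ᶠ k, (ρ k x - ρ' k x) • ω k j x := by
          rw [← finsum_smul' (hdiffU x) (ω i j x)]
          have : ∑ᶠ k, (ρ k x - ρ' k x) = 0 := by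
            rw [finsum_sub_distrib (hfin x) (hfin' x), hsum x, hsum' x, sub_self]
          rw [this, zero_smul, sub_zero]
  refine ⟨key, ?_⟩
  -- difference of local finsums
  have hsub : ∀ (i : ι) (y : X),
      (∑ᶠ k, ρ k y • ω k i y) - (∑ᶠ k, ρ' k y • ω k i y)
        = ∑ᶠ k, (ρ k y - ρ' k y) • ω k i y := by
    intro i y
    rw [← finsum_sub_distrib (hfs i y) (hfs' i y)]
    exact finsum_congr fun k => by rw [sub_smul]
  -- the global form
  set η : X → V := fun x => ∑ᶠ k, (ρ k x - ρ' k x) • ω k (Classical.choose (hcover x)) x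
    with hη_def
  have hη : ∀ i, ∀ x ∈ U i, η x = ∑ᶠ k, (ρ k x - ρ' k x) • ω k i x := by
    intro i x hx
    exact key _ i x (Classical.choose_spec (hcover x)) hx
  refine ⟨η, hη, ?_⟩
  intro x
  obtain ⟨i, hi⟩ := hcover x
  set F : X → V := fun y => ∑ᶠ k, ρ k y • ω k i y with hF
  set F' : X → V := fun y => ∑ᶠ k, ρ' k y • ω k i y with hF'
  have hFF' : ∀ y ∈ U i, (F - F') y = η y := by
    intro y hy
    simp only [Pi.sub_apply, hF, hF']
    rw [hsub i y, hη i y hy]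
  have hdF : d (F - F') x = d η x :=
    hloc (F - F') η (U i) (hUopen i) hFF' x hi
  have hdFsub : d (F - F') x = d F x - d F' x := by
    rw [map_sub]; rfl
  rw [hΘ i x hi, hΘ' i x hi]
  have hGη : (∑ᶠ k, ρ k x • ω k i x) - (∑ᶠ k, ρ' k x • ω k i x) = η x := by
    rw [hsub i x, hη i x hi]
  calc (d F x - H x * (∑ᶠ k, ρ k x • ω k i x))
        - (d F' x - H x * (∑ᶠ k, ρ' k x • ω k i x))
      = (d F x - d F' x)
          - H x * ((∑ᶠ k, ρ k x • ω k i x) - (∑ᶠ k, ρ' k x • ω k i x)) := by rw [mul_sub]; abel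
    _ = d η x - H x * η x := by rw [← hdFsub, hdF, hGη]
end

section
/- Let H be a Hilbert space, {U_i} an open cover of a space X, ĝ_{ij} : U_{ij} → U(H) continuous maps, and P_{ij} : U_{ij} → B(H) continuous families of finite-rank orthogonal projections satisfying the twisted cocycle relation ĝ_{jk}^{-1} P_{ij} ĝ_{jk} + P_{jk} = P_{ik} on U_{ijk}, where projections with equal second index commute pointwise. Given a partition of unity {ρ_j} subordinate to {U_i}, define g_i(x) = exp(2πi Σ_j ρ_j(x) P_{ji}(x)). Then on each overlap U_{ij}, ĝ_{ji}^{-1} g_j ĝ_{ji} = g_i · exp(−2πi P_{ji}) = g_i; in particular the family {g_i} transforms equivariantly under conjugation by the lifts ĝ_{ji}. -/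
open scoped Real

/-- The locally defined family `g_i(x) = exp(2πi Σ_j ρ_j(x) P_{ji}(x))`. -/
noncomputable def twistedExpFamily {H : Type*} [NormedAddCommGroup H]
    [InnerProductSpace ℂ H] [CompleteSpace H] {ι X : Type*}
    (ρ : ι → X → ℝ) (P : ι → ι → X → (H →L[ℂ] H)) (i : ι) (x : X) :
    H →L[ℂ] H :=
  NormedSpace.exp ((2 * (Real.pi : ℂ) * Complex.I) • ∑ᶠ j, ρ j x • P j i x)

lemma exp_smul_of_idem {A : Type*} [NormedRing A] [NormedAlgebra ℂ A] [CompleteSpace A]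
    (c : ℂ) {P : A} (hP : IsIdempotentElem P) :
    NormedSpace.exp (c • P) = 1 + (Complex.exp c - 1) • P := by
  have hsum0 : Summable fun n : ℕ => ((n.factorial : ℂ))⁻¹ • (c • P) ^ n :=
    NormedSpace.expSeries_summable' (c • P)
  have hsumc : Summable fun n : ℕ => ((n.factorial : ℂ))⁻¹ * c ^ n := by
    simpa [smul_eq_mul] using NormedSpace.expSeries_summable' (𝕂 := ℂ) c
  have hsumc' : Summable fun n : ℕ => (((n+1).factorial : ℂ))⁻¹ * c ^ (n+1) := by
    have := hsumc.comp_injective (add_left_injective 1)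
    simpa [Function.comp_def] using this
  have hterm : ∀ n : ℕ, ((n+1).factorial : ℂ)⁻¹ • (c • P) ^ (n+1)
      = ((((n+1).factorial : ℂ))⁻¹ * c ^ (n+1)) • P := by
    intro n
    rw [smul_pow, hP.pow_succ_eq, smul_smul]
  have hexp : Complex.exp c = 1 + ∑' n : ℕ, (((n+1).factorial : ℂ))⁻¹ * c ^ (n+1) := by
    rw [Complex.exp_eq_exp_ℂ]
    simp only [NormedSpace.exp_eq_tsum (𝕂 := ℂ)]
    rw [Summable.tsum_eq_zero_add (by simpa [smul_eq_mul] using hsumc :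
        Summable fun n : ℕ => ((n.factorial : ℂ))⁻¹ • c ^ n)]
    simp [smul_eq_mul]
  simp only [NormedSpace.exp_eq_tsum (𝕂 := ℂ)]
  rw [Summable.tsum_eq_zero_add hsum0]
  simp only [hterm]
  rw [Summable.tsum_smul_const hsumc' P]
  have : (∑' n : ℕ, (((n+1).factorial : ℂ))⁻¹ * c ^ (n+1)) = Complex.exp c - 1 := by
    rw [hexp]; ring
  rw [this]
  simp

set_option synthInstance.maxHeartbeats 800000 in
/-- Given unitary transition data `ĝ_{ij}` (lifts of `PU(H)`-transition
functions) over an open cover `{U_i}` and continuous families `P_{ij}` of finite-rank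
orthogonal projections satisfying the twisted cocycle relation
`ĝ_{jk}⁻¹ P_{ij} ĝ_{jk} + P_{jk} = P_{ik}` on triple overlaps, with projections with
equal second index commuting pointwise, the family
`g_i(x) = exp(2πi Σ_j ρ_j(x) P_{ji}(x))` built from a subordinate partition of unity
`{ρ_j}` satisfies `ĝ_{ji}⁻¹ g_j ĝ_{ji} = g_i · exp(−2πi P_{ji}) = g_i` on each overlap
`U_i ∩ U_j`; in particular `{g_i}` transforms equivariantly under conjugation by the
lifts `ĝ_{ji}`. -/
theorem twisted_projection_family_equivariance
    {H : Type*} [NormedAddCommGroup H] [InnerProductSpace ℂ H] [CompleteSpace H]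
    {ι X : Type*} [TopologicalSpace X]
    (U : ι → Set X) (hUopen : ∀ i, IsOpen (U i))
    (gh : ι → ι → X → (H →L[ℂ] H)ˣ)
    (ghcont : ∀ i j, ContinuousOn (fun x => (gh i j x : H →L[ℂ] H)) (U i ∩ U j))
    (ghunitary : ∀ i j, ∀ x ∈ U i ∩ U j,
      (gh i j x : H →L[ℂ] H) ∈ unitary (H →L[ℂ] H))
    (P : ι → ι → X → (H →L[ℂ] H))
    (hPcont : ∀ i j, ContinuousOn (fun x => P i j x) (U i ∩ U j))
    (hPproj : ∀ i j, ∀ x ∈ U i ∩ U j,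
      IsIdempotentElem (P i j x) ∧ IsSelfAdjoint (P i j x))
    (hPfinrank : ∀ i j, ∀ x ∈ U i ∩ U j,
      FiniteDimensional ℂ (LinearMap.range ((P i j x : H →ₗ[ℂ] H))))
    (hPcomm : ∀ a b i, ∀ x ∈ U a ∩ U b ∩ U i,
      P a i x * P b i x = P b i x * P a i x)
    (hPcocycle : ∀ i j k, ∀ x ∈ U i ∩ U j ∩ U k,
      ((gh j k x)⁻¹ : (H →L[ℂ] H)ˣ) * P i j x * (gh j k x : H →L[ℂ] H)
        + P j k x = P i k x)
    (ρ : ι → X → ℝ)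
    (hfin : ∀ x, (Function.support fun k => ρ k x).Finite)
    (hnonneg : ∀ k x, 0 ≤ ρ k x)
    (hsum : ∀ x, ∑ᶠ k, ρ k x = 1)
    (hsupp : ∀ k x, ρ k x ≠ 0 → x ∈ U k) :
    ∀ i j, ∀ x ∈ U i ∩ U j,
      ((gh j i x)⁻¹ : (H →L[ℂ] H)ˣ) * twistedExpFamily ρ P j x
          * (gh j i x : H →L[ℂ] H)
        = twistedExpFamily ρ P i x
            * NormedSpace.exp ((-(2 * (Real.pi : ℂ) * Complex.I)) • P j i x)
      ∧ ((gh j i x)⁻¹ : (H →L[ℂ] H)ˣ) * twistedExpFamily ρ P j x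
          * (gh j i x : H →L[ℂ] H)
        = twistedExpFamily ρ P i x := by
  intro i j x hx
  obtain ⟨hxi, hxj⟩ := hx
  classical
  set c : ℂ := 2 * (Real.pi : ℂ) * Complex.I with hc
  set s : Finset ι := (hfin x).toFinset with hsdef
  have hmem : ∀ k ∈ s, ρ k x ≠ 0 := fun k hk => (Set.Finite.mem_toFinset _).mp hk
  have hUk : ∀ k ∈ s, x ∈ U k := fun k hk => hsupp k x (hmem k hk)
  have hSsum : ∀ m, (∑ᶠ k, ρ k x • P k m x) = ∑ k ∈ s, ρ k x • P k m x := by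
    intro m
    refine finsum_eq_finset_sum_of_support_subset _ ?_
    intro k hk
    simp only [Function.mem_support] at hk
    have hne : ρ k x ≠ 0 := fun h => hk (by simp [h])
    simpa [hsdef, Set.Finite.mem_toFinset] using hne
  have hρsum : ∑ k ∈ s, ρ k x = 1 := by
    rw [← hsum x]
    exact (finsum_eq_finset_sum_of_support_subset _
      (fun k hk => by simpa [hsdef, Set.Finite.mem_toFinset] using hk)).symm
  have hconjsum : (↑(gh j i x)⁻¹ : H →L[ℂ] H) * (∑ k ∈ s, ρ k x • P k j x) * ↑(gh j i x)
      = (∑ k ∈ s, ρ k x • P k i x) - P j i x := by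
    rw [Finset.mul_sum, Finset.sum_mul]
    have hterm : ∀ k ∈ s, (↑(gh j i x)⁻¹ : H →L[ℂ] H) * (ρ k x • P k j x) * ↑(gh j i x)
        = ρ k x • P k i x - ρ k x • P j i x := by
      intro k hk
      have hco := hPcocycle k j i x ⟨⟨hUk k hk, hxj⟩, hxi⟩
      have hkey : (↑(gh j i x)⁻¹ : H →L[ℂ] H) * P k j x * ↑(gh j i x)
          = P k i x - P j i x := eq_sub_of_add_eq hco
      rw [mul_smul_comm, smul_mul_assoc, hkey, smul_sub]
    rw [Finset.sum_congr rfl hterm, Finset.sum_sub_distrib, ← Finset.sum_smul, hρsum,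
      one_smul]
  have hcomm : Commute (∑ k ∈ s, ρ k x • P k i x) (P j i x) := by
    refine Commute.sum_left _ _ _ fun k hk => ?_
    have hco : Commute (P k i x) (P j i x) := hPcomm k j i x ⟨⟨hUk k hk, hxj⟩, hxi⟩
    exact hco.smul_left (ρ k x)
  have hmain : (↑(gh j i x)⁻¹ : H →L[ℂ] H) * twistedExpFamily ρ P j x * ↑(gh j i x)
      = twistedExpFamily ρ P i x * NormedSpace.exp ((-c) • P j i x) := by
    let +nondep : NormedAlgebra ℚ (H →L[ℂ] H) := .restrictScalars ℚ ℂ _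
    unfold twistedExpFamily
    rw [hSsum j, hSsum i, ← NormedSpace.exp_units_conj' (gh j i x)]
    rw [mul_smul_comm, smul_mul_assoc, hconjsum, smul_sub, sub_eq_add_neg, ← neg_smul]
    exact NormedSpace.exp_add_of_commute ((hcomm.smul_left c).smul_right (-c))
  have hone : NormedSpace.exp ((-c) • P j i x) = 1 := by
    rw [exp_smul_of_idem _ (hPproj j i x ⟨hxj, hxi⟩).1]
    have h1 : Complex.exp (-c) = 1 := by
      rw [hc, Complex.exp_neg, Complex.exp_two_pi_mul_I, inv_one]
    rw [h1]
    simp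
  exact ⟨hmain, by rw [hmain, hone, mul_one]⟩
end
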